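/- arXiv:2312.00350 — 2 statements merged into one kernel-verified Lean document; each statement's English description precedes it below -/
import Mathlib

section
/- For u > arccosh(3/2), the second derivative of φ(u) = arccosh(cosh u − 1/2) satisfies φ″(u) = (−2cosh²u + cosh u − 2)/(4 sinh³ φ(u)) < 0. -/
noncomputable def arcosh (x : ℝ) : ℝ := Real.log (x + Real.sqrt (x ^ 2 - 1))

noncomputable def kappa : ℝ := arcosh (3 / 2)

noncomputable def phi (u : ℝ) : ℝ := arcosh (Real.cosh u - 1 / 2)

noncomputable def S (u : ℝ) : ℝ := Real.sqrt ((Real.cosh u - 1 / 2) ^ 2 - 1)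

lemma S_pos {u : ℝ} (h : 3 / 2 < Real.cosh u) : 0 < S u := by
  apply Real.sqrt_pos.2; nlinarith

lemma S_sq {u : ℝ} (h : 3 / 2 < Real.cosh u) :
    S u ^ 2 = (Real.cosh u - 1 / 2) ^ 2 - 1 := by
  rw [S, Real.sq_sqrt]; nlinarith

lemma cosh_gt {u : ℝ} (hu : kappa < u) : 3 / 2 < Real.cosh u := by
  have hy : (0:ℝ) < 3 / 2 + Real.sqrt ((3/2) ^ 2 - 1) := by positivity
  have hs : Real.sqrt ((3/2:ℝ) ^ 2 - 1) ^ 2 = 5/4 := by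
    rw [Real.sq_sqrt] <;> norm_num
  have hck : Real.cosh kappa = 3 / 2 := by
    rw [kappa, arcosh, Real.cosh_log hy]
    have hinv : (3 / 2 + Real.sqrt ((3/2:ℝ) ^ 2 - 1))⁻¹ = 3 / 2 - Real.sqrt ((3/2:ℝ) ^ 2 - 1) := by
      apply inv_eq_of_mul_eq_one_right; nlinarith
    rw [hinv]; ring
  have hk0 : 0 < kappa := by
    rw [kappa, arcosh]
    apply Real.log_pos
    nlinarith [Real.sq_sqrt (show (0:ℝ) ≤ (3/2)^2 - 1 by norm_num),
      Real.sqrt_nonneg ((3/2:ℝ)^2 - 1)]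
  calc 3/2 = Real.cosh kappa := hck.symm
    _ < Real.cosh u := by
        rw [Real.cosh_lt_cosh]
        rw [abs_of_pos hk0, abs_of_pos (hk0.trans hu)]
        exact hu

lemma hasDerivAt_S {u : ℝ} (h : 3 / 2 < Real.cosh u) :
    HasDerivAt S (2 * (Real.cosh u - 1 / 2) * Real.sinh u / (2 * S u)) u := by
  have hg : HasDerivAt (fun v => Real.cosh v - 1 / 2) (Real.sinh u) u :=
    (Real.hasDerivAt_cosh u).sub_const _
  have hq : HasDerivAt (fun v => (Real.cosh v - 1 / 2) ^ 2 - 1)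
      (2 * (Real.cosh u - 1 / 2) * Real.sinh u) u := by
    have := (hg.pow 2).sub_const 1
    simpa [mul_comm, mul_assoc] using this
  exact hq.sqrt (by nlinarith)

lemma hasDerivAt_phi {u : ℝ} (h : 3 / 2 < Real.cosh u) :
    HasDerivAt phi (Real.sinh u / S u) u := by
  have hs := hasDerivAt_S h
  have hg : HasDerivAt (fun v => Real.cosh v - 1 / 2) (Real.sinh u) u :=
    (Real.hasDerivAt_cosh u).sub_const _
  have hSpos := S_pos h
  have hipos : 0 < Real.cosh u - 1 / 2 + S u := by nlinarith
  have hinner : HasDerivAt (fun v => Real.cosh v - 1 / 2 + S v)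
      (Real.sinh u + 2 * (Real.cosh u - 1 / 2) * Real.sinh u / (2 * S u)) u := hg.add hs
  have hlog := hinner.log hipos.ne'
  have heq : (Real.sinh u + 2 * (Real.cosh u - 1 / 2) * Real.sinh u / (2 * S u))
      / (Real.cosh u - 1 / 2 + S u) = Real.sinh u / S u := by
    rw [div_eq_div_iff hipos.ne' hSpos.ne']
    field_simp
    ring
  rw [heq] at hlog
  exact hlog

lemma hasDerivAt_F {u : ℝ} (h : 3 / 2 < Real.cosh u) :
    HasDerivAt (fun v => Real.sinh v / S v)
      ((-2 * Real.cosh u ^ 2 + Real.cosh u - 2) / (4 * S u ^ 3)) u := by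
  have hSpos := S_pos h
  have hF := (Real.hasDerivAt_sinh u).div (hasDerivAt_S h) hSpos.ne'
  have heq : (Real.cosh u * S u -
        Real.sinh u * (2 * (Real.cosh u - 1 / 2) * Real.sinh u / (2 * S u))) / S u ^ 2
      = (-2 * Real.cosh u ^ 2 + Real.cosh u - 2) / (4 * S u ^ 3) := by
    have h1 := S_sq h
    have h2 : Real.sinh u ^ 2 = Real.cosh u ^ 2 - 1 := by
      have := Real.cosh_sq u; linarith
    field_simp
    linear_combination (8 * Real.cosh u) * h1
      - (4 * (2 * Real.cosh u - 1)) * h2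
  rw [heq] at hF
  exact hF

lemma sinh_phi {u : ℝ} (h : 3 / 2 < Real.cosh u) : Real.sinh (phi u) = S u := by
  have hSpos := S_pos h
  have hipos : 0 < Real.cosh u - 1 / 2 + S u := by nlinarith
  have hφ : phi u = Real.log (Real.cosh u - 1 / 2 + S u) := rfl
  rw [hφ, Real.sinh_log hipos]
  have hinv : (Real.cosh u - 1 / 2 + S u)⁻¹ = Real.cosh u - 1 / 2 - S u := by
    apply inv_eq_of_mul_eq_one_right
    have := S_sq h
    nlinarith
  rw [hinv]; ring

theorem phi_second_deriv (u : ℝ) (hu : kappa < u) :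
    deriv (deriv phi) u
        = (-2 * Real.cosh u ^ 2 + Real.cosh u - 2) / (4 * Real.sinh (phi u) ^ 3) ∧
      deriv (deriv phi) u < 0 := by
  have h := cosh_gt hu
  have hopen : IsOpen {v : ℝ | 3 / 2 < Real.cosh v} :=
    isOpen_lt continuous_const Real.continuous_cosh
  have hEq : deriv phi =ᶠ[nhds u] (fun v => Real.sinh v / S v) := by
    filter_upwards [hopen.mem_nhds h] with v hv
    exact (hasDerivAt_phi hv).deriv
  have hd2 : deriv (deriv phi) u
      = (-2 * Real.cosh u ^ 2 + Real.cosh u - 2) / (4 * S u ^ 3) := by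
    rw [hEq.deriv_eq]
    exact (hasDerivAt_F h).deriv
  have hnum : -2 * Real.cosh u ^ 2 + Real.cosh u - 2 < 0 := by nlinarith
  constructor
  · rw [hd2, sinh_phi h]
  · rw [hd2]
    have hSpos := S_pos h
    apply div_neg_of_neg_of_pos hnum
    positivity
end

section
/- Let p ≥ 1 be an integer and u > arccosh(3/2). Then u² + 4π²p² − 2pu(u − φ(u)) > 0, where φ(u) = arccosh(cosh u − 1/2). -/
lemma cosh_arcosh {x : ℝ} (hx : 1 ≤ x) : Real.cosh (arcosh x) = x := by
  have hs : Real.sqrt (x ^ 2 - 1) ^ 2 = x ^ 2 - 1 :=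
    Real.sq_sqrt (by nlinarith)
  have hs0 : 0 ≤ Real.sqrt (x ^ 2 - 1) := Real.sqrt_nonneg _
  have hy : 0 < x + Real.sqrt (x ^ 2 - 1) := by nlinarith
  unfold arcosh
  rw [Real.cosh_eq, Real.exp_log hy, Real.exp_neg, Real.exp_log hy]
  field_simp
  nlinarith

lemma arcosh_nonneg {x : ℝ} (hx : 1 ≤ x) : 0 ≤ arcosh x := by
  apply Real.log_nonneg
  have := Real.sqrt_nonneg (x ^ 2 - 1)
  linarith

lemma arcosh_lt {x c : ℝ} (hx : 1 ≤ x) (h : x < Real.cosh c) (hc : 0 ≤ c) :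
    arcosh x < c := by
  have h1 : Real.cosh (arcosh x) < Real.cosh c := by rw [cosh_arcosh hx]; exact h
  have h2 := (Real.cosh_lt_cosh).mp h1
  rwa [abs_of_nonneg (arcosh_nonneg hx), abs_of_nonneg hc] at h2

lemma lt_arcosh {x c : ℝ} (hx : 1 ≤ x) (h : Real.cosh c < x) : c < arcosh x := by
  have h1 : Real.cosh c < Real.cosh (arcosh x) := by rw [cosh_arcosh hx]; exact h
  have h2 := (Real.cosh_lt_cosh).mp h1
  calc c ≤ |c| := le_abs_self c
    _ < |arcosh x| := h2
    _ = arcosh x := abs_of_nonneg (arcosh_nonneg hx)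

lemma kappa_pos : 0 < kappa := by
  apply lt_arcosh (by norm_num)
  rw [Real.cosh_zero]; norm_num

lemma cosh_kappa : Real.cosh kappa = 3 / 2 := cosh_arcosh (by norm_num)

lemma kappa_lt_two : kappa < 2 := by
  apply arcosh_lt (by norm_num) _ (by norm_num)
  have h := Real.exp_one_gt_d9
  have h2 : (7 : ℝ) < Real.exp 2 := by
    have : Real.exp 2 = Real.exp 1 * Real.exp 1 := by
      rw [← Real.exp_add]; norm_num
    nlinarith
  rw [Real.cosh_eq]
  have := Real.exp_pos (-2 : ℝ)
  linarith

lemma f_strictmono : StrictMono (fun t => Real.cosh t - Real.cosh (t - kappa)) := by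
  apply strictMono_of_deriv_pos
  intro t
  have h1 : HasDerivAt (fun t : ℝ => Real.cosh t - Real.cosh (t - kappa))
      (Real.sinh t - Real.sinh (t - kappa) * 1) t := by
    exact (Real.hasDerivAt_cosh t).sub (((hasDerivAt_id t).sub_const kappa).cosh)
  rw [h1.deriv]
  have : t - kappa < t := by linarith [kappa_pos]
  have := Real.sinh_lt_sinh.mpr this
  linarith

theorem quad_pos (p : ℕ) (hp : 1 ≤ p) (u : ℝ) (hu : kappa < u) :
    0 < u ^ 2 + 4 * Real.pi ^ 2 * p ^ 2 - 2 * p * u * (u - phi u) := by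
  have hk := kappa_pos
  have hu0 : 0 < u := lt_trans hk hu
  have hcosh : 3 / 2 < Real.cosh u := by
    rw [← cosh_kappa]
    apply Real.cosh_lt_cosh.mpr
    rwa [abs_of_nonneg hk.le, abs_of_nonneg hu0.le]
  have hx1 : (1 : ℝ) ≤ Real.cosh u - 1 / 2 := by linarith
  -- phi u < u
  have hlt : phi u < u := by
    apply arcosh_lt hx1 (by linarith) hu0.le
  -- u - kappa < phi u
  have hgt : u - kappa < phi u := by
    apply lt_arcosh hx1
    have hmono := f_strictmono hu
    simp only at hmono
    rw [sub_self, Real.cosh_zero, cosh_kappa] at hmono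
    linarith
  set d := u - phi u with hd
  have hd0 : 0 < d := by simp [hd]; linarith
  have hd2 : d < 2 := by
    have : d < kappa := by simp [hd]; linarith
    linarith [kappa_lt_two]
  have hp' : (1 : ℝ) ≤ (p : ℝ) := by exact_mod_cast hp
  have hpi := Real.pi_gt_three
  have hdsq : d ^ 2 < 4 := by nlinarith
  have hgap : (32 : ℝ) < 4 * Real.pi ^ 2 - d ^ 2 := by nlinarith
  have hP2 : (1 : ℝ) ≤ (p : ℝ) ^ 2 := by nlinarith
  have key : (32 : ℝ) ≤ (p : ℝ) ^ 2 * (4 * Real.pi ^ 2 - d ^ 2) := by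
    nlinarith
  nlinarith [sq_nonneg (u - (p : ℝ) * d)]
end
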